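/- Let G be a linearly ordered group, T a finite subset of G, and x_k an element of G strictly greater than every element of T. If x_k·T ∩ T·T = ∅ and T·x_k ∩ T·T = ∅, then for S = T ∪ {x_k} one has |S·S| ≥ |T·T| + |T| + 1. -/

import Mathlib

open Pointwise

theorem stmt8 {G : Type*} [Group G] [LinearOrder G]
    [CovariantClass G G (· * ·) (· ≤ ·)]
    [CovariantClass G G (Function.swap (· * ·)) (· ≤ ·)]
    (T : Finset G) (xk : G) (hgt : ∀ t ∈ T, t < xk)
    (h1 : ({xk} * T : Finset G) ∩ (T * T) = ∅)
    (h2 : (T * {xk} : Finset G) ∩ (T * T) = ∅) :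
    (T * T).card + T.card + 1 ≤ ((insert xk T) * (insert xk T)).card := by
  classical
  have hsub : ((T * T) ∪ ({xk} * T)) ∪ {xk * xk} ⊆ (insert xk T) * (insert xk T) := by
    intro a ha
    simp only [Finset.mem_union, Finset.mem_singleton] at ha
    rcases ha with (h | h) | h
    · obtain ⟨t, ht, t', ht', rfl⟩ := Finset.mem_mul.1 h
      exact Finset.mul_mem_mul (Finset.mem_insert_of_mem ht) (Finset.mem_insert_of_mem ht')
    · obtain ⟨s, hs, t, ht, rfl⟩ := Finset.mem_mul.1 h
      simp only [Finset.mem_singleton] at hs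
      subst hs
      exact Finset.mul_mem_mul (Finset.mem_insert_self _ _) (Finset.mem_insert_of_mem ht)
    · subst h
      exact Finset.mul_mem_mul (Finset.mem_insert_self _ _) (Finset.mem_insert_self _ _)
  have hd1 : Disjoint (T * T) ({xk} * T) := by
    exact (Finset.disjoint_iff_inter_eq_empty.2 h1).symm
  have hxxTT : xk * xk ∉ T * T := by
    intro h
    obtain ⟨t, ht, t', ht', he⟩ := Finset.mem_mul.1 h
    have : t * t' < xk * xk := mul_lt_mul_of_lt_of_le (hgt t ht) (hgt t' ht').le
    exact absurd he (ne_of_lt this)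
  have hxxxT : xk * xk ∉ ({xk} * T : Finset G) := by
    intro h
    obtain ⟨s, hs, t, ht, he⟩ := Finset.mem_mul.1 h
    have hlt : s * t < xk * xk := by
      rw [Finset.mem_singleton.1 hs]
      exact mul_lt_mul_right (hgt t ht) xk
    exact absurd he (ne_of_lt hlt)
  have hd2 : Disjoint ((T * T) ∪ ({xk} * T)) ({xk * xk} : Finset G) := by
    simp only [Finset.disjoint_singleton_right, Finset.mem_union]
    tauto
  have hcard : (((T * T) ∪ ({xk} * T)) ∪ {xk * xk}).card = (T * T).card + T.card + 1 := by
    rw [Finset.card_union_of_disjoint hd2, Finset.card_union_of_disjoint hd1,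
      Finset.card_singleton_mul, Finset.card_singleton]
  calc (T * T).card + T.card + 1 = (((T * T) ∪ ({xk} * T)) ∪ {xk * xk}).card := hcard.symm
    _ ≤ _ := Finset.card_le_card hsub
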